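/- The function W, defined on (ℂ₊ ∪ ℝ) \ {−√2, 0, √2} by W(z) = (1/2)·Log(1 + 2/(z² − 2)) if z ∉ (0, √2) and W(z) = (1/2)·ln|1 + 2/(z² − 2)| − iπ/2 if z ∈ (0, √2), is continuous on its domain and analytic (holomorphic) on the open upper half-plane ℂ₊; it extends the real function x ↦ (1/2)·ln(1 + 2/(x² − 2)) defined for real |x| > √2. -/

import Mathlib

open Complex Set Filter Topology

/-- The function `W` from the paper, extended arbitrarily off its natural domain. -/
noncomputable def Wfun (z : ℂ) : ℂ :=
  if z.im = 0 ∧ 0 < z.re ∧ z.re < Real.sqrt 2 then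
    ((Real.log ‖1 + 2 / (z ^ 2 - 2)‖ / 2 : ℝ) : ℂ)
      - Complex.I * (Real.pi : ℂ) / 2
  else Complex.log (1 + 2 / (z ^ 2 - 2)) / 2

/-- The natural domain `(ℂ₊ ∪ ℝ) \ {−√2, 0, √2}` of `W`. -/
noncomputable def Wdom : Set ℂ :=
  {z : ℂ | (0 < z.im ∨ z.im = 0) ∧ z ≠ (-(Real.sqrt 2) : ℝ) ∧ z ≠ 0 ∧ z ≠ (Real.sqrt 2 : ℝ)}

lemma Wsq_ne {z : ℂ} (hm : z ≠ ((-(Real.sqrt 2) : ℝ) : ℂ)) (hp : z ≠ ((Real.sqrt 2 : ℝ) : ℂ)) :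
    z ^ 2 - 2 ≠ 0 := by
  intro h
  have hc : ((Real.sqrt 2 : ℝ) : ℂ) ^ 2 = 2 := by
    norm_cast
    exact Real.sq_sqrt (by norm_num)
  have h2 : (z - ((Real.sqrt 2 : ℝ) : ℂ)) * (z + ((Real.sqrt 2 : ℝ) : ℂ)) = 0 := by
    linear_combination h - hc
  rcases mul_eq_zero.mp h2 with h' | h'
  · exact hp (by linear_combination h')
  · apply hm
    push_cast
    linear_combination h'

lemma Wf_im (z : ℂ) :
    (1 + 2 / (z ^ 2 - 2)).im = -(4 * z.re * z.im) / Complex.normSq (z ^ 2 - 2) := by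
  simp only [Complex.add_im, Complex.one_im, Complex.div_im, Complex.sub_re, Complex.sub_im,
    pow_two, Complex.mul_re, Complex.mul_im, Complex.normSq_apply, Complex.re_ofNat, Complex.im_ofNat]
  ring

lemma Wu_im (z : ℂ) :
    (1 - 2 / z ^ 2).im = 4 * z.re * z.im / Complex.normSq (z ^ 2) := by
  simp only [Complex.sub_im, Complex.one_im, Complex.div_im, pow_two, Complex.mul_re,
    Complex.mul_im, Complex.normSq_apply, Complex.re_ofNat, Complex.im_ofNat]
  ring

lemma Wu_eq_inv {z : ℂ} (h0 : z ≠ 0) (h2 : z ^ 2 - 2 ≠ 0) :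
    1 - 2 / z ^ 2 = (1 + 2 / (z ^ 2 - 2))⁻¹ := by
  have hz2 : z ^ 2 ≠ 0 := pow_ne_zero _ h0
  apply eq_inv_of_mul_eq_one_left
  field_simp
  ring

lemma Wf_real (x : ℝ) :
    1 + 2 / ((x : ℂ) ^ 2 - 2) = ((1 + 2 / (x ^ 2 - 2) : ℝ) : ℂ) := by push_cast; ring

lemma Wu_real (x : ℝ) :
    1 - 2 / (x : ℂ) ^ 2 = ((1 - 2 / x ^ 2 : ℝ) : ℂ) := by push_cast; ring

lemma Warith1 {t : ℝ} (ht : 0 < t) : 0 < 1 + 2 / (-t - 2) := by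
  have h1 : (0 : ℝ) < t + 2 := by linarith
  have h2 : 2 / (-t - 2) = -(2 / (t + 2)) := by
    rw [show -t - 2 = -(t + 2) by ring, div_neg]
  rw [h2]
  have : 2 / (t + 2) < 1 := (div_lt_one h1).mpr (by linarith)
  linarith

lemma Warith2 {x : ℝ} (h : 2 < x ^ 2) : 0 < 1 + 2 / (x ^ 2 - 2) := by
  have : (0:ℝ) < x ^ 2 - 2 := by linarith
  positivity

lemma Warith3 {x : ℝ} (h0 : x ≠ 0) (h2 : x ^ 2 < 2) : 1 + 2 / (x ^ 2 - 2) < 0 := by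
  have hx2 : (0:ℝ) < x ^ 2 := by positivity
  have hd : x ^ 2 - 2 ≠ 0 := by intro h; nlinarith
  have heq : 1 + 2 / (x ^ 2 - 2) = x ^ 2 / (x ^ 2 - 2) := by
    field_simp
    ring
  rw [heq]
  exact div_neg_of_pos_of_neg hx2 (by linarith)

lemma Warith4 {x : ℝ} (h0 : x ≠ 0) (h2 : x ^ 2 < 2) : 1 - 2 / x ^ 2 < 0 := by
  have hx2 : (0:ℝ) < x ^ 2 := by positivity
  have heq : 1 - 2 / x ^ 2 = (x ^ 2 - 2) / x ^ 2 := by field_simp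
  rw [heq]
  exact div_neg_of_neg_of_pos (by linarith) hx2

lemma Wsq_lt {x : ℝ} (h0 : 0 < x) (h1 : x < Real.sqrt 2) : x ^ 2 < 2 := by
  nlinarith [Real.sq_sqrt (show (0:ℝ) ≤ 2 by norm_num), Real.sqrt_nonneg 2,
    mul_pos (sub_pos.mpr h1) (add_pos (Real.sqrt_pos.mpr (by norm_num : (0:ℝ) < 2)) h0)]

lemma Wslit_of_im_pos {z : ℂ} (him : 0 < z.im) (hne : z ^ 2 - 2 ≠ 0) :
    1 + 2 / (z ^ 2 - 2) ∈ Complex.slitPlane := by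
  rw [Complex.mem_slitPlane_iff]
  by_cases hre : z.re = 0
  · left
    have hw : z ^ 2 - 2 = ((-(z.im ^ 2) - 2 : ℝ) : ℂ) := by
      apply Complex.ext <;>
        simp [pow_two, Complex.mul_re, Complex.mul_im, hre]
    rw [hw, show (1 : ℂ) + 2 / ((( -(z.im ^ 2) - 2 : ℝ)) : ℂ)
        = ((1 + 2 / (-(z.im ^ 2) - 2) : ℝ) : ℂ) from by push_cast; ring, Complex.ofReal_re]
    exact Warith1 (pow_pos him 2)
  · right
    rw [Wf_im]
    apply div_ne_zero
    · have : z.re * z.im ≠ 0 := mul_ne_zero hre him.ne'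
      intro h
      apply this
      linarith [h]
    · exact (Complex.normSq_pos.mpr hne).ne'

lemma Wfun_eq_log {w : ℂ} (h : ¬(w.im = 0 ∧ 0 < w.re ∧ w.re < Real.sqrt 2)) :
    Wfun w = Complex.log (1 + 2 / (w ^ 2 - 2)) / 2 := by
  simp only [Wfun, if_neg h]

lemma Wlog_ofReal_neg {r : ℝ} (hr : r < 0) :
    Complex.log (r : ℂ) = ((Real.log |r| : ℝ) : ℂ) + (Real.pi : ℂ) * Complex.I := by
  apply Complex.ext
  · simp [Complex.log_re, Complex.norm_real]
  · simp [Complex.log_im, Complex.arg_ofReal_of_neg hr]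

/-- On the segment `S` (and the part of the upper half-plane above it), `Wfun` agrees with
`w ↦ -log (1 - 2/w²)/2`. -/
lemma WfunA_eq {w : ℂ} (hw : w ∈ Wdom) (h1 : 0 < w.re) (h2 : w.re < Real.sqrt 2) :
    Wfun w = -Complex.log (1 - 2 / w ^ 2) / 2 := by
  obtain ⟨him, hm, h0, hp⟩ := hw
  have hne : w ^ 2 - 2 ≠ 0 := Wsq_ne hm hp
  rcases him with him | him
  · -- upper half-plane part
    have hW : Wfun w = Complex.log (1 + 2 / (w ^ 2 - 2)) / 2 :=
      Wfun_eq_log (fun h => absurd h.1 him.ne')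
    have hfim : (1 + 2 / (w ^ 2 - 2)).im < 0 := by
      rw [Wf_im]
      apply div_neg_of_neg_of_pos
      · nlinarith
      · exact Complex.normSq_pos.mpr hne
    have harg : (1 + 2 / (w ^ 2 - 2)).arg ≠ Real.pi := by
      intro h
      exact absurd (Complex.arg_eq_pi_iff.mp h).2 hfim.ne
    rw [hW, Wu_eq_inv h0 hne, Complex.log_inv _ harg]
    ring
  · -- real segment part
    have hq : w = ((w.re : ℝ) : ℂ) := by
      apply Complex.ext <;> simp [him]
    have hx2 : w.re ^ 2 < 2 := Wsq_lt h1 h2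
    have hrneg : 1 - 2 / w.re ^ 2 < 0 := Warith4 h1.ne' hx2
    have hu : 1 - 2 / w ^ 2 = ((1 - 2 / w.re ^ 2 : ℝ) : ℂ) := by
      have := Wu_real w.re
      rw [← hq] at this
      exact this
    have hfeq : 1 + 2 / (w ^ 2 - 2) = (((1 - 2 / w.re ^ 2 : ℝ) : ℂ))⁻¹ := by
      have hf := Wu_eq_inv h0 hne
      rw [hu] at hf
      have h := congrArg Inv.inv hf
      rw [inv_inv] at h
      exact h.symm
    have habs : ‖1 + 2 / (w ^ 2 - 2)‖ = |1 - 2 / w.re ^ 2|⁻¹ := by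
      rw [hfeq, norm_inv, Complex.norm_real, Real.norm_eq_abs]
    have hcond : w.im = 0 ∧ 0 < w.re ∧ w.re < Real.sqrt 2 := ⟨him, h1, h2⟩
    simp only [Wfun, if_pos hcond]
    rw [habs, hu, Wlog_ofReal_neg hrneg, Real.log_inv]
    push_cast
    ring

lemma Wfun_cwa_aux {z : ℂ} {V : Set ℂ} (hV : V ∈ 𝓝 z)
    (hcond : ∀ w ∈ V, ¬(w.im = 0 ∧ 0 < w.re ∧ w.re < Real.sqrt 2))
    (h : ContinuousWithinAt (fun w => Complex.log (1 + 2 / (w ^ 2 - 2)) / 2) (Wdom ∩ V) z) :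
    ContinuousWithinAt Wfun Wdom z := by
  refine (continuousWithinAt_inter hV).mp
    (h.congr (fun w hw => Wfun_eq_log (hcond w hw.2))
      (Wfun_eq_log (hcond z (mem_of_mem_nhds hV))))

/-- `W` is continuous on `(ℂ₊ ∪ ℝ) \ {−√2, 0, √2}`, holomorphic on the open
upper half-plane, and extends the real function `x ↦ (1/2)·ln(1 + 2/(x² − 2))`, `|x| > √2`. -/
theorem Wfun_continuousOn_analytic :
    ContinuousOn Wfun Wdom ∧
    DifferentiableOn ℂ Wfun {z : ℂ | 0 < z.im} ∧
    (∀ x : ℝ, Real.sqrt 2 < |x| →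
      Wfun (x : ℂ) = ((Real.log (1 + 2 / (x ^ 2 - 2)) / 2 : ℝ) : ℂ)) := by
  refine ⟨?_, ?_, ?_⟩
  · -- continuity
    intro z hz
    obtain ⟨him, hm, h0, hp⟩ := hz
    have hzdom : z ∈ Wdom := ⟨him, hm, h0, hp⟩
    have hne : z ^ 2 - 2 ≠ 0 := Wsq_ne hm hp
    have hfc : ContinuousAt (fun w : ℂ => 1 + 2 / (w ^ 2 - 2)) z := by
      exact continuousAt_const.add (continuousAt_const.div (by fun_prop) hne)
    by_cases hS : z.im = 0 ∧ 0 < z.re ∧ z.re < Real.sqrt 2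
    · -- Case A : the segment (0, √2) (only reached when z is real there)
      obtain ⟨h1, h2, h3⟩ := hS
      have hVopen : IsOpen {w : ℂ | 0 < w.re ∧ w.re < Real.sqrt 2} :=
        (isOpen_lt continuous_const Complex.continuous_re).inter
          (isOpen_lt Complex.continuous_re continuous_const)
      have hV : {w : ℂ | 0 < w.re ∧ w.re < Real.sqrt 2} ∈ 𝓝 z :=
        hVopen.mem_nhds ⟨h2, h3⟩
      have hq : z = ((z.re : ℝ) : ℂ) := by apply Complex.ext <;> simp [h1]
      have hx2 : z.re ^ 2 < 2 := Wsq_lt h2 h3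
      have hrneg : 1 - 2 / z.re ^ 2 < 0 := Warith4 h2.ne' hx2
      have hu : 1 - 2 / z ^ 2 = ((1 - 2 / z.re ^ 2 : ℝ) : ℂ) := by
        have := Wu_real z.re
        rw [← hq] at this
        exact this
      have hre' : (1 - 2 / z ^ 2).re < 0 := by rw [hu, Complex.ofReal_re]; exact hrneg
      have him' : (1 - 2 / z ^ 2).im = 0 := by rw [hu]; exact Complex.ofReal_im _
      have huc : ContinuousAt (fun w : ℂ => 1 - 2 / w ^ 2) z :=
        continuousAt_const.sub (continuousAt_const.div (by fun_prop) (pow_ne_zero 2 h0))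
      have hmaps : Set.MapsTo (fun w : ℂ => 1 - 2 / w ^ 2)
          (Wdom ∩ {w : ℂ | 0 < w.re ∧ w.re < Real.sqrt 2}) {v : ℂ | 0 ≤ v.im} := by
        intro w hw
        show (0:ℝ) ≤ (1 - 2 / w ^ 2).im
        rw [Wu_im]
        apply div_nonneg _ (Complex.normSq_nonneg _)
        rcases hw.1.1 with h | h
        · nlinarith [hw.2.1]
        · simp [h]
      have hg : ContinuousWithinAt (fun w : ℂ => -Complex.log (1 - 2 / w ^ 2) / 2)
          (Wdom ∩ {w : ℂ | 0 < w.re ∧ w.re < Real.sqrt 2}) z := by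
        have hlog : ContinuousWithinAt Complex.log {v : ℂ | 0 ≤ v.im}
            ((fun w : ℂ => 1 - 2 / w ^ 2) z) :=
          Complex.continuousWithinAt_log_of_re_neg_of_im_zero hre' him'
        exact ((ContinuousWithinAt.comp (f := fun w : ℂ => 1 - 2 / w ^ 2) hlog huc.continuousWithinAt hmaps).neg).div_const 2
      refine (continuousWithinAt_inter hV).mp
        (hg.congr (fun w hw => WfunA_eq hw.1 hw.2.1 hw.2.2) (WfunA_eq hzdom h2 h3))
    · -- Case B
      rcases him with him | him
      · -- interior of upper half-plane
        have hV : {w : ℂ | 0 < w.im} ∈ 𝓝 z :=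
          (isOpen_lt continuous_const Complex.continuous_im).mem_nhds him
        refine Wfun_cwa_aux hV (fun w hw h => absurd h.1 (ne_of_gt hw)) ?_
        exact ((hfc.clog (Wslit_of_im_pos him hne)).div_const 2).continuousWithinAt
      · -- real axis
        have hq : z = ((z.re : ℝ) : ℂ) := by apply Complex.ext <;> simp [him]
        have hxp : z.re ≠ Real.sqrt 2 := fun h => hp (by rw [hq, h])
        have hxm : z.re ≠ -Real.sqrt 2 := fun h => hm (by rw [hq, h])
        have hx0 : z.re ≠ 0 := fun h => h0 (by rw [hq, h]; simp)
        have hfz : 1 + 2 / (z ^ 2 - 2) = ((1 + 2 / (z.re ^ 2 - 2) : ℝ) : ℂ) := by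
          have := Wf_real z.re
          rw [← hq] at this
          exact this
        by_cases hneg : -Real.sqrt 2 < z.re ∧ z.re < 0
        · -- segment (−√2, 0): boundary case for the log
          have hx2 : z.re ^ 2 < 2 := by
            have := Wsq_lt (x := -z.re) (by linarith [hneg.2]) (by linarith [hneg.1])
            nlinarith [this]
          have hrneg : 1 + 2 / (z.re ^ 2 - 2) < 0 := Warith3 hx0 hx2
          have hV : {w : ℂ | w.re < 0} ∈ 𝓝 z :=
            (isOpen_lt Complex.continuous_re continuous_const).mem_nhds hneg.2
          refine Wfun_cwa_aux hV (fun w hw h => absurd h.2.1 (not_lt.mpr hw.le)) ?_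
          have hre' : (1 + 2 / (z ^ 2 - 2)).re < 0 := by rw [hfz, Complex.ofReal_re]; exact hrneg
          have him' : (1 + 2 / (z ^ 2 - 2)).im = 0 := by rw [hfz]; exact Complex.ofReal_im _
          have hmaps : Set.MapsTo (fun w : ℂ => 1 + 2 / (w ^ 2 - 2))
              (Wdom ∩ {w : ℂ | w.re < 0}) {v : ℂ | 0 ≤ v.im} := by
            intro w hw
            show (0:ℝ) ≤ (1 + 2 / (w ^ 2 - 2)).im
            rw [Wf_im]
            apply div_nonneg _ (Complex.normSq_nonneg _)
            rcases hw.1.1 with h | h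
            · have hwre : w.re < 0 := hw.2
              nlinarith [mul_pos (neg_pos.mpr hwre) h]
            · simp [h]
          have hlog : ContinuousWithinAt Complex.log {v : ℂ | 0 ≤ v.im}
              ((fun w : ℂ => 1 + 2 / (w ^ 2 - 2)) z) :=
            Complex.continuousWithinAt_log_of_re_neg_of_im_zero hre' him'
          exact (ContinuousWithinAt.comp (f := fun w : ℂ => 1 + 2 / (w ^ 2 - 2)) hlog hfc.continuousWithinAt hmaps).div_const 2
        · -- |x| > √2
          have hsqrt2 : (0:ℝ) < Real.sqrt 2 := Real.sqrt_pos.mpr (by norm_num)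
          have htri : z.re < -Real.sqrt 2 ∨ Real.sqrt 2 < z.re := by
            rcases lt_trichotomy z.re 0 with h | h | h
            · left
              by_contra hcon
              exact hneg ⟨lt_of_le_of_ne (not_lt.mp hcon) (Ne.symm hxm), h⟩
            · exact absurd h hx0
            · right
              rcases lt_trichotomy z.re (Real.sqrt 2) with h' | h' | h'
              · exact absurd ⟨him, h, h'⟩ hS
              · exact absurd h' hxp
              · exact h'
          have hx2 : 2 < z.re ^ 2 := by
            rcases htri with h | h
            · nlinarith [Real.sq_sqrt (show (0:ℝ) ≤ 2 by norm_num)]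
            · nlinarith [Real.sq_sqrt (show (0:ℝ) ≤ 2 by norm_num)]
          have hV : {w : ℂ | w.re < 0 ∨ Real.sqrt 2 < w.re} ∈ 𝓝 z := by
            refine ((isOpen_lt Complex.continuous_re continuous_const).union
              (isOpen_lt continuous_const Complex.continuous_re)).mem_nhds ?_
            rcases htri with h | h
            · exact Or.inl (by show z.re < 0; linarith)
            · exact Or.inr h
          refine Wfun_cwa_aux hV ?_ ?_
          · rintro w hw ⟨-, hw1, hw2⟩
            rcases hw with h | h
            · exact absurd hw1 (not_lt.mpr h.le)
            · exact absurd hw2 (not_lt.mpr h.le)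
          · have hslit : 1 + 2 / (z ^ 2 - 2) ∈ Complex.slitPlane := by
              rw [Complex.mem_slitPlane_iff]
              left
              rw [hfz, Complex.ofReal_re]
              exact Warith2 hx2
            exact ((hfc.clog hslit).div_const 2).continuousWithinAt
  · -- differentiability on the upper half-plane
    refine DifferentiableOn.congr (f := fun w => Complex.log (1 + 2 / (w ^ 2 - 2)) / 2)
      ?_ ?_
    · intro z hz
      have him : 0 < z.im := hz
      have hm : z ≠ ((-(Real.sqrt 2) : ℝ) : ℂ) := fun h => by simp [h] at him
      have hp : z ≠ ((Real.sqrt 2 : ℝ) : ℂ) := fun h => by simp [h] at him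
      have hne : z ^ 2 - 2 ≠ 0 := Wsq_ne hm hp
      have hfd : DifferentiableAt ℂ (fun w : ℂ => 1 + 2 / (w ^ 2 - 2)) z :=
        (differentiableAt_const _).add ((differentiableAt_const _).div (by fun_prop) hne)
      exact ((hfd.clog (Wslit_of_im_pos him hne)).div_const 2).differentiableWithinAt
    · intro z hz
      exact Wfun_eq_log (fun h => absurd h.1 (ne_of_gt hz))
  · -- real extension
    intro x hx
    have hsqrt2 : (0:ℝ) < Real.sqrt 2 := Real.sqrt_pos.mpr (by norm_num)
    have hx2 : 2 < x ^ 2 := by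
      nlinarith [Real.sq_sqrt (show (0:ℝ) ≤ 2 by norm_num), _root_.sq_abs x, abs_nonneg x,
        mul_pos (sub_pos.mpr hx) (add_pos_of_nonneg_of_pos (abs_nonneg x) hsqrt2)]
    have hcond : ¬((x : ℂ).im = 0 ∧ 0 < (x : ℂ).re ∧ (x : ℂ).re < Real.sqrt 2) := by
      simp only [Complex.ofReal_im, Complex.ofReal_re]
      rintro ⟨-, hx0, hxs⟩
      nlinarith [Wsq_lt hx0 hxs]
    rw [Wfun_eq_log hcond, Wf_real, ← Complex.ofReal_log (le_of_lt (Warith2 hx2))]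
    push_cast
    ring
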